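/- For every natural number m ≥ 1 and every real x, sin_λ((2m+1)·x : a) = (2m+1)·sin_λ(x : a)·∏_{k=1}^{m} (1 − sin_λ(x : a)² / sin²(kπ/(2m+1))). -/

import Mathlib

open Real Complex Polynomial Finset

lemma aux_poly_prod {R : Type*} [CommRing R] [IsDomain R] (n : ℕ) (hn : n ≠ 0) {ζ : R} (h : IsPrimitiveRoot ζ n) :
    (X ^ n - 1 : R[X]) = ∏ k ∈ Finset.range n, (X - C (ζ ^ k)) := by
  rw [X_pow_sub_one_eq_prod (Nat.pos_of_ne_zero hn) h]
  refine (Finset.prod_nbij (fun k => ζ ^ k) ?_ ?_ ?_ ?_).symm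
  · intro k _
    exact (Polynomial.mem_nthRootsFinset (Nat.pos_of_ne_zero hn) (1 : R)).2
      (by rw [← pow_mul, mul_comm, pow_mul, h.pow_eq_one, one_pow])
  · exact h.injOn_pow
  · intro ξ hξ
    have : NeZero n := ⟨hn⟩
    obtain ⟨i, hik, rfl⟩ := h.eq_pow_of_pow_eq_one ((Polynomial.mem_nthRootsFinset (Nat.pos_of_ne_zero hn) (1 : R)).1 hξ)
    exact ⟨i, by simpa using hik, rfl⟩
  · intro k _; rfl

lemma aux_val_prod {ζ : ℂ} (n : ℕ) (hn : n ≠ 0) (h : IsPrimitiveRoot ζ n) (z : ℂ) :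
    z ^ n - 1 = ∏ k ∈ Finset.range n, (z - ζ ^ k) := by
  have := congrArg (Polynomial.eval z) (aux_poly_prod n hn h)
  simpa [Polynomial.eval_prod] using this

lemma aux_const (m : ℕ) {ζ : ℂ} (h : IsPrimitiveRoot ζ (2 * m + 1)) :
    ∏ k ∈ Finset.Icc 1 (2 * m), (1 - ζ ^ k) = (2 * m + 1 : ℂ) := by
  have hn : (2 * m + 1) ≠ 0 := by omega
  have hp := aux_poly_prod (2 * m + 1) hn h
  have hsplit : Finset.range (2 * m + 1) = insert 0 (Finset.Icc 1 (2 * m)) := by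
    ext k; simp; omega
  rw [hsplit, Finset.prod_insert (by simp)] at hp
  have hg : (∑ i ∈ Finset.range (2 * m + 1), (X : ℂ[X]) ^ i) * (X - 1) = X ^ (2 * m + 1) - 1 :=
    geom_sum_mul _ _
  have hcancel : ∏ k ∈ Finset.Icc 1 (2 * m), ((X : ℂ[X]) - C (ζ ^ k))
      = ∑ i ∈ Finset.range (2 * m + 1), (X : ℂ[X]) ^ i := by
    have hne : (X : ℂ[X]) - C (ζ ^ 0) ≠ 0 := X_sub_C_ne_zero _
    apply mul_left_cancel₀ hne
    rw [← hp, ← hg]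
    simp [mul_comm]
  have := congrArg (Polynomial.eval 1) hcancel
  simpa [Polynomial.eval_prod, Polynomial.eval_geom_sum] using this

lemma aux_sin_factor (t : ℝ) :
    Complex.exp (2 * t * Complex.I) - 1
      = Complex.exp (t * Complex.I) * (2 * Complex.I) * (Real.sin t : ℂ) := by
  rw [Complex.ofReal_sin, Complex.sin]
  have h0 : Complex.exp (2 * t * Complex.I) = Complex.exp (t * Complex.I) * Complex.exp (t * Complex.I) := by
    rw [← Complex.exp_add]; ring_nf
  have h1 : Complex.exp (t * Complex.I) * Complex.exp (-(t:ℂ) * Complex.I) = 1 := by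
    rw [← Complex.exp_add]; ring_nf; exact Complex.exp_zero
  rw [h0]
  linear_combination h1 + (Complex.exp (t*Complex.I)^2
    - Complex.exp (t*Complex.I) * Complex.exp (-(t:ℂ)*Complex.I)) * Complex.I_sq

lemma aux_pair (θ c : ℝ) :
    (Complex.exp (2 * θ * Complex.I) - Complex.exp (2 * c * Complex.I)) *
      (Complex.exp (2 * θ * Complex.I) - Complex.exp (-(2 * c * Complex.I)))
    = Complex.exp (2 * θ * Complex.I) *
        (4 * ((Real.sin c : ℂ) ^ 2 - (Real.sin θ : ℂ) ^ 2)) := by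
  have key : ∀ t : ℝ, Complex.exp (2 * t * Complex.I) + Complex.exp (-(2 * t * Complex.I))
      = 2 * (1 - 2 * (Real.sin t : ℂ) ^ 2) := by
    intro t
    have hc : Real.cos (2 * t) = 1 - 2 * Real.sin t ^ 2 := by
      have := Real.sin_sq_add_cos_sq t
      rw [Real.cos_two_mul]; nlinarith
    have : Complex.cos (2 * t : ℝ) = ((1 : ℝ) - 2 * Real.sin t ^ 2 : ℝ) := by
      rw [← Complex.ofReal_cos, hc]
    rw [Complex.cos] at this
    have harg : ((2 * t : ℝ) : ℂ) * Complex.I = 2 * (t:ℂ) * Complex.I := by push_cast; ring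
    have harg' : -((2 * t : ℝ) : ℂ) * Complex.I = -(2 * (t:ℂ) * Complex.I) := by push_cast; ring
    rw [harg, harg'] at this
    push_cast at this ⊢
    linear_combination 2 * this
  have h1 : Complex.exp (2 * θ * Complex.I) * Complex.exp (-(2 * θ * Complex.I)) = 1 := by
    rw [← Complex.exp_add]; ring_nf; exact Complex.exp_zero
  have h2 : Complex.exp (2 * c * Complex.I) * Complex.exp (-(2 * c * Complex.I)) = 1 := by
    rw [← Complex.exp_add]; ring_nf; exact Complex.exp_zero
  have h3 := key θ
  have h4 := key c
  linear_combination Complex.exp (2 * θ * Complex.I) * h3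
    - Complex.exp (2 * θ * Complex.I) * h4 - h1 + h2

lemma aux_split (m : ℕ) (f : ℕ → ℂ) :
    ∏ k ∈ Finset.Icc 1 (2 * m), f k
      = ∏ k ∈ Finset.Icc 1 m, (f k * f (2 * m + 1 - k)) := by
  have hsplit : Finset.Icc 1 (2 * m) = Finset.Icc 1 m ∪ Finset.Icc (m + 1) (2 * m) := by
    ext k; simp; omega
  have hdisj : Disjoint (Finset.Icc 1 m) (Finset.Icc (m + 1) (2 * m)) := by
    simp [Finset.disjoint_left]; omega
  rw [hsplit, Finset.prod_union hdisj, Finset.prod_mul_distrib]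
  congr 1
  refine Finset.prod_nbij' (fun k => 2 * m + 1 - k) (fun k => 2 * m + 1 - k) ?_ ?_ ?_ ?_ ?_
  · intro k hk; simp at hk ⊢; omega
  · intro k hk; simp at hk ⊢; omega
  · intro k hk; simp at hk ⊢; omega
  · intro k hk; simp at hk ⊢; omega
  · intro k hk; simp at hk; congr 1; omega

lemma zeta_pow (n : ℕ) (hn : n ≠ 0) (k : ℕ) :
    Complex.exp (2 * π * Complex.I / n) ^ k
      = Complex.exp (2 * ((k * π / n : ℝ) : ℂ) * Complex.I) := by
  rw [← Complex.exp_nat_mul]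
  congr 1
  have hn' : (n : ℂ) ≠ 0 := Nat.cast_ne_zero.2 hn
  push_cast
  field_simp

lemma zeta_pow_sub (n : ℕ) (hn : n ≠ 0) (k : ℕ) (hk : k ≤ n) :
    Complex.exp (2 * π * Complex.I / n) ^ (n - k)
      = Complex.exp (-(2 * ((k * π / n : ℝ) : ℂ) * Complex.I)) := by
  rw [← Complex.exp_nat_mul]
  have hn' : (n : ℂ) ≠ 0 := Nat.cast_ne_zero.2 hn
  have hcast : ((n - k : ℕ) : ℂ) = (n : ℂ) - k := by
    push_cast [Nat.cast_sub hk]; ring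
  have harg : ((n - k : ℕ) : ℂ) * (2 * π * Complex.I / n)
      = 2 * π * Complex.I + -(2 * ((k * π / n : ℝ) : ℂ) * Complex.I) := by
    rw [hcast]; push_cast; field_simp; ring
  rw [harg, Complex.exp_add, Complex.exp_two_pi_mul_I, one_mul]

-- the constant: 2m+1 = ∏ 4 sin²(kπ/(2m+1))
lemma aux_const_real (m : ℕ) :
    ((2 * m + 1 : ℕ) : ℝ)
      = ∏ k ∈ Finset.Icc 1 m, (4 * Real.sin (k * π / (2 * m + 1 : ℕ)) ^ 2) := by
  have hn : (2 * m + 1) ≠ 0 := by omega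
  have h := Complex.isPrimitiveRoot_exp (2 * m + 1) hn
  have hc := aux_const m h
  rw [aux_split m (fun k => 1 - Complex.exp (2 * π * Complex.I / (2 * m + 1 : ℕ)) ^ k)] at hc
  have hprod : ∀ k ∈ Finset.Icc 1 m,
      (1 - Complex.exp (2 * π * Complex.I / (2 * m + 1 : ℕ)) ^ k) *
        (1 - Complex.exp (2 * π * Complex.I / (2 * m + 1 : ℕ)) ^ (2 * m + 1 - k))
      = ((4 * Real.sin (k * π / (2 * m + 1 : ℕ)) ^ 2 : ℝ) : ℂ) := by
    intro k hk
    simp only [Finset.mem_Icc] at hk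
    rw [zeta_pow _ hn, zeta_pow_sub _ hn _ (by omega)]
    have h0 : (1 : ℂ) = Complex.exp (2 * ((0:ℝ):ℂ) * Complex.I) := by norm_num
    have := aux_pair 0 (k * π / (2 * m + 1 : ℕ))
    rw [← h0] at this
    rw [this]
    push_cast [Real.sin_zero]
    ring
  rw [Finset.prod_congr rfl hprod] at hc
  exact_mod_cast hc.symm

-- main product formula
lemma aux_main (m : ℕ) (θ : ℝ) :
    Real.sin (((2 * m + 1 : ℕ) : ℝ) * θ)
      = Real.sin θ * ∏ k ∈ Finset.Icc 1 m,
          (4 * (Real.sin (k * π / (2 * m + 1 : ℕ)) ^ 2 - Real.sin θ ^ 2)) := by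
  have hn : (2 * m + 1) ≠ 0 := by omega
  have h := Complex.isPrimitiveRoot_exp (2 * m + 1) hn
  have hv := aux_val_prod (2 * m + 1) hn h (Complex.exp (2 * (θ:ℂ) * Complex.I))
  -- LHS
  have hL : Complex.exp (2 * (θ:ℂ) * Complex.I) ^ (2 * m + 1)
      = Complex.exp (2 * ((((2 * m + 1 : ℕ) : ℝ) * θ : ℝ) : ℂ) * Complex.I) := by
    rw [← Complex.exp_nat_mul]; congr 1; push_cast; ring
  -- split the product
  have hsplit : Finset.range (2 * m + 1) = insert 0 (Finset.Icc 1 (2 * m)) := by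
    ext k; simp; omega
  rw [hsplit, Finset.prod_insert (by simp)] at hv
  rw [aux_split m (fun k => Complex.exp (2 * (θ:ℂ) * Complex.I)
      - Complex.exp (2 * π * Complex.I / (2 * m + 1 : ℕ)) ^ k)] at hv
  have hprod : ∀ k ∈ Finset.Icc 1 m,
      (Complex.exp (2 * (θ:ℂ) * Complex.I) - Complex.exp (2 * π * Complex.I / (2 * m + 1 : ℕ)) ^ k) *
        (Complex.exp (2 * (θ:ℂ) * Complex.I) - Complex.exp (2 * π * Complex.I / (2 * m + 1 : ℕ)) ^ (2 * m + 1 - k))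
      = Complex.exp (2 * (θ:ℂ) * Complex.I) *
          ((4 * (Real.sin (k * π / (2 * m + 1 : ℕ)) ^ 2 - Real.sin θ ^ 2) : ℝ) : ℂ) := by
    intro k hk
    simp only [Finset.mem_Icc] at hk
    rw [zeta_pow _ hn, zeta_pow_sub _ hn _ (by omega)]
    rw [aux_pair θ (k * π / (2 * m + 1 : ℕ))]
    push_cast
    ring
  rw [Finset.prod_congr rfl hprod, Finset.prod_mul_distrib, Finset.prod_const,
    Nat.card_Icc] at hv
  -- now hv : exp(2nθI) - 1 = (exp(2θI) - 1) * (exp(2θI)^m * ∏ coerced)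
  have hm1 : (m + 1 - 1) = m := by omega
  rw [hm1] at hv
  have hpow : Complex.exp (2 * (θ:ℂ) * Complex.I) ^ m
      = Complex.exp (2 * (((m : ℝ) * θ : ℝ) : ℂ) * Complex.I) := by
    rw [← Complex.exp_nat_mul]; congr 1; push_cast; ring
  rw [hL, hpow, pow_zero, aux_sin_factor (((2 * m + 1 : ℕ) : ℝ) * θ), aux_sin_factor θ] at hv
  -- combine exponentials
  have hcomb : Complex.exp ((θ:ℂ) * Complex.I) * Complex.exp (2 * (((m : ℝ) * θ : ℝ) : ℂ) * Complex.I)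
      = Complex.exp (((((2 * m + 1 : ℕ) : ℝ) * θ : ℝ) : ℂ) * Complex.I) := by
    rw [← Complex.exp_add]; congr 1; push_cast; ring
  have hne : Complex.exp (((((2 * m + 1 : ℕ) : ℝ) * θ : ℝ) : ℂ) * Complex.I) * (2 * Complex.I) ≠ 0 := by
    apply mul_ne_zero (Complex.exp_ne_zero _)
    simp [Complex.I_ne_zero]
  have hC : ((Real.sin (((2 * m + 1 : ℕ) : ℝ) * θ) : ℝ) : ℂ)
      = ((Real.sin θ : ℝ) : ℂ) * ∏ k ∈ Finset.Icc 1 m,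
          ((4 * (Real.sin (k * π / (2 * m + 1 : ℕ)) ^ 2 - Real.sin θ ^ 2) : ℝ) : ℂ) := by
    apply mul_left_cancel₀ hne
    linear_combination hv + (2 * Complex.I * ((Real.sin θ : ℝ) : ℂ) *
      ∏ k ∈ Finset.Icc 1 m,
        ((4 * (Real.sin (k * π / (2 * m + 1 : ℕ)) ^ 2 - Real.sin θ ^ 2) : ℝ) : ℂ)) * hcomb
  rw [← Complex.ofReal_prod] at hC
  exact_mod_cast hC

/-- sin_λ((2m+1)·x : a)
= (2m+1)·sin_λ(x : a)·∏_{k=1}^{m} (1 − sin_λ(x : a)² / sin²(kπ/(2m+1))). -/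
theorem degenerate_sin_odd_multiple_product (lam a : ℝ) (hlam : lam ≠ 0)
    (ha : 1 + lam * a > 0) (L : ℝ) (hL : L = lam⁻¹ * Real.log (1 + lam * a))
    (m : ℕ) (hm : 1 ≤ m) (x : ℝ) :
    Real.sin ((2 * m + 1) * x * L)
      = (2 * m + 1) * Real.sin (x * L) * ∏ k ∈ Finset.Icc 1 m,
          (1 - Real.sin (x * L) ^ 2 / Real.sin (k * π / (2 * m + 1)) ^ 2) := by
  have hmain := aux_main m (x * L)
  have hconst := aux_const_real m
  push_cast at hmain hconst
  have hsk : ∀ k ∈ Finset.Icc 1 m, Real.sin ((k:ℝ) * π / (2 * (m:ℝ) + 1)) ≠ 0 := by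
    intro k hk
    simp only [Finset.mem_Icc] at hk
    have hk1 : (1:ℝ) ≤ (k:ℝ) := by exact_mod_cast hk.1
    have hkm : (k:ℝ) ≤ (m:ℝ) := by exact_mod_cast hk.2
    have hd : (0:ℝ) < 2 * (m:ℝ) + 1 := by positivity
    refine ne_of_gt (Real.sin_pos_of_pos_of_lt_pi ?_ ?_)
    · have : (0:ℝ) < (k:ℝ) * π := by positivity
      positivity
    · rw [div_lt_iff₀ hd]
      have hπ : (0:ℝ) < π := Real.pi_pos
      nlinarith
  have key : ∀ k ∈ Finset.Icc 1 m,
      4 * (Real.sin ((k:ℝ) * π / (2 * (m:ℝ) + 1)) ^ 2 - Real.sin (x * L) ^ 2)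
      = (4 * Real.sin ((k:ℝ) * π / (2 * (m:ℝ) + 1)) ^ 2) *
          (1 - Real.sin (x * L) ^ 2 / Real.sin ((k:ℝ) * π / (2 * (m:ℝ) + 1)) ^ 2) := by
    intro k hk
    have := hsk k hk
    field_simp
  rw [Finset.prod_congr rfl key, Finset.prod_mul_distrib, ← hconst] at hmain
  have harg : (2 * (m:ℝ) + 1) * x * L = (2 * (m:ℝ) + 1) * (x * L) := by ring
  rw [harg, hmain]
  ring
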